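/- Let B be an n×n real symmetric positive definite matrix. Then all generalized eigenvalues of the pencil (B, 𝓛(B)) lie in the half-open interval (0, 1], i.e. 0 < λ_k(B, 𝓛(B)) ≤ 1 for all k = 1, …, n. -/

import Mathlib

open Matrix

/-- The Euclidean norm of a vector. -/
noncomputable def enorm {m : Type*} [Fintype m] (v : m → ℝ) : ℝ :=
  Real.sqrt (∑ i, (v i) ^ 2)

/-- The square root of a positive semidefinite real matrix, as `Matrix.PosSemidef.sqrt` was
defined in older Mathlib. -/
noncomputable def psdSqrt {m : Type*} [Fintype m] [DecidableEq m] {A : Matrix m m ℝ}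
    (hA : A.PosSemidef) : Matrix m m ℝ :=
  (hA.1.eigenvectorUnitary : Matrix m m ℝ) * diagonal (Real.sqrt ∘ hA.1.eigenvalues) *
    (star (hA.1.eigenvectorUnitary : Matrix m m ℝ))

theorem psdSqrt_isHermitian {m : Type*} [Fintype m] [DecidableEq m] {A : Matrix m m ℝ}
    (hA : A.PosSemidef) : (psdSqrt hA).IsHermitian := by
  show (psdSqrt hA)ᴴ = psdSqrt hA
  simp only [psdSqrt, conjTranspose_mul, star_eq_conjTranspose, conjTranspose_conjTranspose,
    diagonal_conjTranspose, star_trivial, Matrix.mul_assoc]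

/-- The `k`-th smallest generalized eigenvalue (counted with multiplicity) of the
symmetric pencil `(A, B)` with `B` positive definite, i.e. the `k`-th smallest root of
`det (A - λ B) = 0`.  It is defined as the `k`-th smallest eigenvalue of the Hermitian
matrix `√(B⁻¹) * A * √(B⁻¹)`, which is similar to `B⁻¹ * A`.  Junk value `0` is returned
if `A` is not symmetric or `B` is not positive definite. -/
noncomputable def genEig {m : Type*} [Fintype m] [DecidableEq m]
    (A B : Matrix m m ℝ) (k : Fin (Fintype.card m)) : ℝ :=
  letI := Classical.propDecidable
  if h : A.IsHermitian ∧ B.PosDef then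
    let S : Matrix m m ℝ := psdSqrt (h.2.inv).posSemidef
    have hS : S.IsHermitian := psdSqrt_isHermitian (h.2.inv).posSemidef
    have hC : (S * A * S).IsHermitian := by
      show (S * A * S)ᴴ = S * A * S
      rw [conjTranspose_mul, conjTranspose_mul, hS.eq, h.1.eq, Matrix.mul_assoc]
    let f : Fin (Fintype.card m) → ℝ := hC.eigenvalues₀
    f (Tuple.sort f k)
  else 0

/-- The `k`-th smallest generalized eigenvalue of a pencil of `n × n` matrices,
indexed by `Fin n`.  `genEigFin A B 0` is the smallest one, `λ_1(A,B)`, and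
`genEigFin A B (Fin.last _)` is the largest one, `λ_n(A,B)`. -/
noncomputable def genEigFin {n : ℕ} (A B : Matrix (Fin n) (Fin n) ℝ) (k : Fin n) : ℝ :=
  genEig A B (Fin.cast (Fintype.card_fin n).symm k)

/-- The (row-sum) lumping operator: `lump B` is the diagonal matrix whose `i`-th
diagonal entry is the sum of the absolute values of the entries of the `i`-th row of `B`. -/
noncomputable def lump {m : Type*} [Fintype m] [DecidableEq m]
    (B : Matrix m m ℝ) : Matrix m m ℝ :=
  Matrix.diagonal fun i => ∑ j, |B i j|

/-- The banded part `D_i` of a matrix: it keeps all sub- and super-diagonals of index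
smaller than `i` (i.e. the entries with `|j - k| < i`) and sets the rest to zero. -/
def diagBand {n : ℕ} (B : Matrix (Fin n) (Fin n) ℝ) (i : ℕ) : Matrix (Fin n) (Fin n) ℝ :=
  Matrix.of fun j k => if |((j : ℕ) : ℤ) - ((k : ℕ) : ℤ)| < (i : ℤ) then B j k else 0

/-- The lumped preconditioner `P_i = D_i + 𝓛(R_i)` where `B = D_i + R_i`, `D_i` being the
banded part of `B` of bandwidth `i` and `R_i` the remainder. -/
noncomputable def precond {n : ℕ} (B : Matrix (Fin n) (Fin n) ℝ) (i : ℕ) :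
    Matrix (Fin n) (Fin n) ℝ :=
  diagBand B i + lump (B - diagBand B i)



section Aux

open Finset

lemma diag_pos_of_posDef' {m : Type*} [Fintype m] [DecidableEq m]
    {B : Matrix m m ℝ} (hB : B.PosDef) (i : m) : 0 < B i i := by
  exact hB.diag_pos

lemma lump_posDef {m : Type*} [Fintype m] [DecidableEq m]
    {B : Matrix m m ℝ} (hB : B.PosDef) : (lump B).PosDef := by
  refine Matrix.PosDef.diagonal fun i => ?_
  have h1 : 0 < B i i := diag_pos_of_posDef' hB i
  have h2 : |B i i| ≤ ∑ j, |B i j| :=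
    Finset.single_le_sum (f := fun j => |B i j|) (fun j _ => abs_nonneg _) (Finset.mem_univ i)
  have := abs_pos.mpr h1.ne'
  linarith

lemma lump_sub_posSemidef {m : Type*} [Fintype m] [DecidableEq m]
    {B : Matrix m m ℝ} (hB : B.PosDef) : (lump B - B).PosSemidef := by
  have hsym : ∀ i j, B j i = B i j := fun i j => by
    have := congrFun (congrFun hB.isHermitian.eq j) i
    simpa [conjTranspose_apply] using this.symm
  refine Matrix.PosSemidef.of_dotProduct_mulVec_nonneg ?_ ?_
  · exact (isHermitian_diagonal _).sub hB.isHermitian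
  · intro x
    have hstar : star x = x := by
      funext j; simp
    rw [hstar, sub_mulVec, dotProduct_sub]
    have hQ : x ⬝ᵥ (lump B) *ᵥ x = ∑ i, ∑ j, |B i j| * x i ^ 2 := by
      simp only [lump, dotProduct, mulVec_diagonal]
      refine Finset.sum_congr rfl fun i _ => ?_
      rw [Finset.sum_mul, Finset.mul_sum]
      refine Finset.sum_congr rfl fun j _ => ?_
      ring
    have hB2 : x ⬝ᵥ B *ᵥ x = ∑ i, ∑ j, x i * (B i j * x j) := by
      simp only [dotProduct, mulVec, Finset.mul_sum]
    rw [hQ, hB2]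
    have swap : ∑ i, ∑ j, |B i j| * x j ^ 2 = ∑ i, ∑ j, |B i j| * x i ^ 2 := by
      rw [Finset.sum_comm]
      refine Finset.sum_congr rfl fun i _ => Finset.sum_congr rfl fun j _ => ?_
      rw [hsym]
    have key : (∑ i, ∑ j, x i * (B i j * x j)) * 2 ≤
        (∑ i, ∑ j, |B i j| * x i ^ 2) + ∑ i, ∑ j, |B i j| * x j ^ 2 := by
      rw [Finset.sum_mul, ← Finset.sum_add_distrib]
      refine Finset.sum_le_sum fun i _ => ?_
      rw [Finset.sum_mul, ← Finset.sum_add_distrib]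
      refine Finset.sum_le_sum fun j _ => ?_
      nlinarith [le_abs_self (B i j), neg_abs_le (B i j), sq_nonneg (x i - x j),
        sq_nonneg (x i + x j), abs_nonneg (B i j)]
    rw [swap] at key
    linarith

lemma eigenvalues_le_one_of_one_sub_posSemidef {m : Type*} [Fintype m] [DecidableEq m]
    {C : Matrix m m ℝ} (hC : C.IsHermitian) (h1 : (1 - C).PosSemidef) (i : m) :
    hC.eigenvalues i ≤ 1 := by
  set v : m → ℝ := ⇑(hC.eigenvectorBasis i) with hv
  have hnorm : ‖hC.eigenvectorBasis i‖ = 1 := hC.eigenvectorBasis.orthonormal.1 i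
  have hvv : v ⬝ᵥ v = 1 := by
    have h2 : (inner ℝ (hC.eigenvectorBasis i) (hC.eigenvectorBasis i) : ℝ) = 1 := by
      rw [real_inner_self_eq_norm_sq, hnorm]; norm_num
    rw [← h2, PiLp.inner_apply]
    simp [dotProduct, v, sq]
  have heig : hC.eigenvalues i = v ⬝ᵥ (C *ᵥ v) := by
    have hmul : C *ᵥ v = hC.eigenvalues i • v := hC.mulVec_eigenvectorBasis i
    rw [hmul, dotProduct_smul, smul_eq_mul, hvv, mul_one]
  have := h1.dotProduct_mulVec_nonneg v
  have hstar : star v = v := by funext j; simp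
  rw [hstar, sub_mulVec, dotProduct_sub, one_mulVec, hvv] at this
  linarith [this, heig.le, heig.ge]

lemma eigenvalues_pos_of_det_ne_zero {m : Type*} [Fintype m] [DecidableEq m]
    {C : Matrix m m ℝ} (hC : C.PosSemidef) (hdet : C.det ≠ 0) (i : m) :
    0 < hC.1.eigenvalues i := by
  refine lt_of_le_of_ne (hC.eigenvalues_nonneg i) (Ne.symm fun h => hdet ?_)
  rw [hC.1.det_eq_prod_eigenvalues]
  exact Finset.prod_eq_zero (Finset.mem_univ i) (by simp [h])

lemma eig0_pos {m : Type*} [Fintype m] [DecidableEq m]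
    {C : Matrix m m ℝ} (hC : C.PosSemidef) (hdet : C.det ≠ 0)
    (j : Fin (Fintype.card m)) : 0 < hC.1.eigenvalues₀ j := by
  have he : hC.1.eigenvalues₀ j
      = hC.1.eigenvalues (Fintype.equivOfCardEq (Fintype.card_fin _) j) := by
    rw [Matrix.IsHermitian.eigenvalues]
    congr 1
    exact (Equiv.symm_apply_apply _ j).symm
  rw [he]
  exact eigenvalues_pos_of_det_ne_zero hC hdet _

lemma eig0_le_one {m : Type*} [Fintype m] [DecidableEq m]
    {C : Matrix m m ℝ} (hC : C.IsHermitian) (h1 : (1 - C).PosSemidef)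
    (j : Fin (Fintype.card m)) : hC.eigenvalues₀ j ≤ 1 := by
  have he : hC.eigenvalues₀ j
      = hC.eigenvalues (Fintype.equivOfCardEq (Fintype.card_fin _) j) := by
    rw [Matrix.IsHermitian.eigenvalues]
    congr 1
    exact (Equiv.symm_apply_apply _ j).symm
  rw [he]
  exact eigenvalues_le_one_of_one_sub_posSemidef hC h1 _

lemma psdSqrt_mul_self' {m : Type*} [Fintype m] [DecidableEq m] {A : Matrix m m ℝ}
    (hA : A.PosSemidef) : psdSqrt hA * psdSqrt hA = A := by
  set U : Matrix m m ℝ := (hA.1.eigenvectorUnitary : Matrix m m ℝ) with hUdef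
  have hU : star U * U = 1 := Unitary.coe_star_mul_self _
  have hD : diagonal (Real.sqrt ∘ hA.1.eigenvalues) * diagonal (Real.sqrt ∘ hA.1.eigenvalues)
      = diagonal (RCLike.ofReal ∘ hA.1.eigenvalues) := by
    rw [diagonal_mul_diagonal]
    congr 1
    funext i
    simp [Real.mul_self_sqrt (hA.eigenvalues_nonneg i)]
  calc psdSqrt hA * psdSqrt hA
      = U * (diagonal (Real.sqrt ∘ hA.1.eigenvalues) * (star U * U)
          * diagonal (Real.sqrt ∘ hA.1.eigenvalues)) * star U := by
        simp only [psdSqrt, U, Matrix.mul_assoc]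
    _ = A := by
        rw [hU, Matrix.mul_one, hD]
        have := hA.1.spectral_theorem
        rw [Unitary.conjStarAlgAut_apply] at this
        exact this.symm

lemma genEig_elim {m : Type*} [Fintype m] [DecidableEq m]
    (A B : Matrix m m ℝ) (hA : A.IsHermitian) (hB : B.PosDef)
    (k : Fin (Fintype.card m)) (P : ℝ → Prop)
    (hP : ∀ (inst : DecidableEq m),
      letI := inst
      ∀ (C : Matrix m m ℝ) (hC : C.IsHermitian)
        (_ : C = psdSqrt (hB.inv).posSemidef * A * psdSqrt (hB.inv).posSemidef)
        (j : Fin (Fintype.card m)), P (hC.eigenvalues₀ j)) :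
    P (genEig A B k) := by
  rw [genEig, dif_pos ⟨hA, hB⟩]
  exact hP _ _ _ rfl _

end Aux

/-- for SPD `B`, all generalized eigenvalues of `(B, 𝓛(B))` lie in `(0, 1]`. -/
theorem stmt_6 {n : ℕ} (B : Matrix (Fin n) (Fin n) ℝ) (hB : B.PosDef) :
    ∀ k : Fin n, 0 < genEigFin B (lump B) k ∧ genEigFin B (lump B) k ≤ 1 := by
  intro k
  have hL : (lump B).PosDef := lump_posDef hB
  have hLump : (lump B - B).PosSemidef := lump_sub_posSemidef hB
  rw [genEigFin]
  set L : Matrix (Fin n) (Fin n) ℝ := lump B with hLdef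
  refine genEig_elim B L hB.isHermitian hL _ (fun x => 0 < x ∧ x ≤ 1) ?_
  intro inst C hC hCeq j
  subst hCeq
  have hdetL : (0:ℝ) < L.det := hL.det_pos
  set S : Matrix (Fin n) (Fin n) ℝ := psdSqrt (hL.inv).posSemidef with hSdef
  have hS : S.IsHermitian := psdSqrt_isHermitian (hL.inv).posSemidef
  -- C is positive semidefinite
  have hCpsd : (S * B * S).PosSemidef := by
    have := hB.posSemidef.mul_mul_conjTranspose_same S
    rwa [hS.eq] at this
  -- S * S = L⁻¹
  have hSS : S * S = L⁻¹ := psdSqrt_mul_self' (hL.inv).posSemidef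
  -- det S ≠ 0
  have hdetS : S.det ≠ 0 := by
    have h3 : S.det * S.det = (L⁻¹).det := by rw [← det_mul, hSS]
    have h4 : (0:ℝ) < (L⁻¹).det := (hL.inv).det_pos
    intro h0
    rw [h0, mul_zero] at h3
    exact h4.ne' h3.symm
  have hdetC : (S * B * S).det ≠ 0 := by
    rw [det_mul, det_mul]
    exact mul_ne_zero (mul_ne_zero hdetS hB.det_pos.ne') hdetS
  -- S * L * S = 1
  have hLinv : L⁻¹ * L = 1 :=
    nonsing_inv_mul _ (isUnit_iff_ne_zero.mpr hdetL.ne')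
  have e1 : S * (S * L) = 1 := by
    rw [← Matrix.mul_assoc, hSS, hLinv]
  have e2 : S * L * S = 1 := mul_eq_one_comm.mp e1
  -- 1 - C is positive semidefinite
  have hone : (1 - S * B * S).PosSemidef := by
    have := hLump.mul_mul_conjTranspose_same S
    rw [hS.eq] at this
    have heq : S * (L - B) * S = 1 - S * B * S := by
      rw [Matrix.mul_sub, Matrix.sub_mul, e2]
    rwa [heq] at this
  exact ⟨eig0_pos hCpsd hdetC j, eig0_le_one hC hone j⟩
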